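/- arXiv:2510.18788 — 6 statements merged into one kernel-verified Lean document; each statement's English description precedes it below -/
import Mathlib

section
/- For every ε > 0 there exists a set A ⊆ ℕ with upper Banach density greater than 1 − ε such that for every sequence (k_i) of natural numbers, every nested sequence B_1 ⊇ B_2 ⊇ ⋯ of infinite subsets of ℕ, and every sequence (t_i) of natural numbers, it is NOT the case that for all i, the set of all sums ∑_{n∈F} n over finite subsets F ⊆ B_i with k_i ≤ |F| ≤ k_i + i is contained in A − t_i. -/
open Filter
open scoped Classical BigOperators

/-- Upper Banach density `d*(A) = limsup_{L→∞} sup_M |A ∩ [M, M+L)| / L`. -/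
noncomputable def upperBanachDensity (A : Set ℕ) : ℝ :=
  Filter.limsup (fun L : ℕ =>
    ⨆ M : ℕ, (((Finset.Ico M (M + L)).filter (fun n => n ∈ A)).card : ℝ) / L)
    Filter.atTop

set_option maxHeartbeats 3200000 in
theorem stmt0 :
    ∀ ε : ℝ, 0 < ε → ∃ A : Set ℕ,
      1 - ε < upperBanachDensity A ∧
      ∀ (k : ℕ → ℕ) (B : ℕ → Set ℕ) (t : ℕ → ℕ),
        (∀ i, B (i + 1) ⊆ B i) → (∀ i, (B i).Infinite) →
        ¬ (∀ i : ℕ, 1 ≤ i →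
            ∀ F : Finset ℕ, ↑F ⊆ B i → k i ≤ F.card → F.card ≤ k i + i →
              (∑ n ∈ F, n) + t i ∈ A) := by
  intro ε hε
  -- choose m with 1/m < ε
  obtain ⟨m₀, hm₀⟩ := exists_nat_one_div_lt hε
  set m : ℕ := m₀ + 1 with hmdef
  have hm1 : 1 ≤ m := by omega
  have hminv : (1 : ℝ) / (m : ℝ) < ε := by
    have h : ((m : ℝ)) = (m₀ : ℝ) + 1 := by rw [hmdef]; push_cast; ring
    rwa [h]
  -- choose primes
  have hpex : ∀ j : ℕ, ∃ q : ℕ, m * (j + 1) ^ 2 * 2 ^ (j + 2) ≤ q ∧ q.Prime :=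
    fun j => Nat.exists_infinite_primes _
  choose p hple hpp using hpex
  have hpj_big : ∀ j, j + 1 ≤ p j := by
    intro j
    have h1 : j + 1 ≤ m * (j + 1) ^ 2 * 2 ^ (j + 2) := by
      have h2 : 1 ≤ 2 ^ (j + 2) := Nat.one_le_two_pow
      calc j + 1 = (j + 1) * 1 := by ring
        _ ≤ (j + 1) * (j + 1) := Nat.mul_le_mul_left _ (by omega)
        _ = 1 * (j + 1) ^ 2 * 1 := by ring
        _ ≤ m * (j + 1) ^ 2 * 2 ^ (j + 2) := Nat.mul_le_mul (Nat.mul_le_mul hm1 le_rfl) h2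
    exact h1.trans (hple j)
  set A : Set ℕ := {x : ℕ | ¬ ∃ j, p j ≤ x ∧ x % p j < j + 1} with hAdef
  refine ⟨A, ?_, ?_⟩
  · -- DENSITY PART
    have hbound1 : ∀ L M : ℕ,
        (((Finset.Ico M (M + L)).filter (fun n => n ∈ A)).card : ℝ) / L ≤ 1 := by
      intro L M
      rcases Nat.eq_zero_or_pos L with h0 | hpos
      · simp [h0]
      · rw [div_le_one (by exact_mod_cast hpos)]
        have h1 : ((Finset.Ico M (M + L)).filter (fun n => n ∈ A)).card ≤ L := by
          have h2 := Finset.card_filter_le (Finset.Ico M (M + L)) (fun n => n ∈ A)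
          have h3 : (Finset.Ico M (M + L)).card = L := by
            rw [Nat.card_Ico]; omega
          omega
        exact_mod_cast h1
    have hcount : ∀ L : ℕ, 1 ≤ L →
        (1 - 1 / (m : ℝ)) * (L : ℝ) ≤
          (((Finset.Ico 0 (0 + L)).filter (fun n => n ∈ A)).card : ℝ) := by
      intro L hL
      set T := Finset.Ico 0 (0 + L) with hT
      have hTcard : T.card = L := by rw [hT, Nat.card_Ico]; omega
      have hsplit : (T.filter (fun n => n ∈ A)).card
          + (T.filter (fun n => ¬ n ∈ A)).card = L := by
        rw [Finset.card_filter_add_card_filter_not]; exact hTcard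
      have hsub : T.filter (fun n => ¬ n ∈ A) ⊆
          (Finset.range L).biUnion
            (fun j => T.filter (fun x => p j ≤ x ∧ x % p j < j + 1)) := by
        intro x hx
        rw [Finset.mem_filter] at hx
        obtain ⟨hxT, hxA⟩ := hx
        have hxR : ∃ j, p j ≤ x ∧ x % p j < j + 1 := by
          by_contra hno
          exact hxA hno
        obtain ⟨j, hj1, hj2⟩ := hxR
        have hxL : x < 0 + L := (Finset.mem_Ico.mp hxT).2
        refine Finset.mem_biUnion.mpr ⟨j, ?_, ?_⟩
        · refine Finset.mem_range.mpr ?_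
          have h4 := hpj_big j
          omega
        · exact Finset.mem_filter.mpr ⟨hxT, hj1, hj2⟩
      have hcnt : ∀ j : ℕ,
          (((T.filter (fun x => p j ≤ x ∧ x % p j < j + 1)).card : ℝ)) ≤
            ((L : ℝ) / m) * (1 / 2) ^ (j + 1) := by
        intro j
        by_cases hpL : p j ≤ L
        · have hnat : (T.filter (fun x => p j ≤ x ∧ x % p j < j + 1)).card ≤
              (L / p j + 1) * (j + 1) := by
            have hinj : (T.filter (fun x => p j ≤ x ∧ x % p j < j + 1)).card ≤
                ((Finset.range (L / p j + 1)) ×ˢ (Finset.range (j + 1))).card := by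
              apply Finset.card_le_card_of_injOn (fun x => (x / p j, x % p j))
              · intro x hx
                rw [Finset.mem_coe, Finset.mem_filter] at hx
                obtain ⟨hxT, _, hxmod⟩ := hx
                have hxL : x < 0 + L := (Finset.mem_Ico.mp hxT).2
                refine Finset.mem_product.mpr ⟨Finset.mem_range.mpr ?_, Finset.mem_range.mpr hxmod⟩
                have h3 : x / p j ≤ L / p j := Nat.div_le_div_right (by omega)
                show x / p j < L / p j + 1
                omega
              · intro x hx y hy hxy
                have hx' := Nat.div_add_mod x (p j)
                have hy' := Nat.div_add_mod y (p j)
                rw [Prod.mk.injEq] at hxy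
                obtain ⟨e1, e2⟩ := hxy
                rw [← hx', ← hy', e1, e2]
            have hprod : ((Finset.range (L / p j + 1)) ×ˢ (Finset.range (j + 1))).card =
                (L / p j + 1) * (j + 1) := by
              rw [Finset.card_product, Finset.card_range, Finset.card_range]
            omega
          have hppos : (0 : ℝ) < (p j : ℝ) := by
            have h5 : (0:ℕ) < p j := by have := (hpp j).two_le; omega
            exact_mod_cast h5
          have h2pos : (0 : ℝ) < (2 : ℝ) ^ (j + 1) := by positivity
          have hmpos : (0 : ℝ) < (m : ℝ) := by exact_mod_cast hm1
          have hcast1 : (((T.filter (fun x => p j ≤ x ∧ x % p j < j + 1)).card : ℝ)) ≤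
              ((L / p j : ℕ) + 1 : ℝ) * ((j : ℝ) + 1) := by
            have h4 : (((L / p j + 1) * (j + 1) : ℕ) : ℝ) =
                ((L / p j : ℕ) + 1 : ℝ) * ((j : ℝ) + 1) := by
              push_cast; ring
            calc (((T.filter (fun x => p j ≤ x ∧ x % p j < j + 1)).card : ℝ))
                ≤ (((L / p j + 1) * (j + 1) : ℕ) : ℝ) := by exact_mod_cast hnat
              _ = _ := h4
          have hcast2 : ((L / p j : ℕ) : ℝ) ≤ (L : ℝ) / (p j : ℝ) := Nat.cast_div_le
          have hstep : ((L : ℝ) / (p j : ℝ) + 1) * ((j : ℝ) + 1) ≤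
              ((L : ℝ) / m) * (1 / 2) ^ (j + 1) := by
            have hpbig : ((m : ℝ) * ((j : ℝ) + 1) ^ 2 * 2 ^ (j + 2)) ≤ (p j : ℝ) := by
              have h6 := hple j
              have h7 : ((m * (j + 1) ^ 2 * 2 ^ (j + 2) : ℕ) : ℝ) ≤ (p j : ℝ) := by
                exact_mod_cast h6
              calc ((m : ℝ) * ((j : ℝ) + 1) ^ 2 * 2 ^ (j + 2))
                  = ((m * (j + 1) ^ 2 * 2 ^ (j + 2) : ℕ) : ℝ) := by push_cast; ring
                _ ≤ (p j : ℝ) := h7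
            have hpLr : (p j : ℝ) ≤ (L : ℝ) := by exact_mod_cast hpL
            have hLpos : (0 : ℝ) < (L : ℝ) := by
              have h8 : (0:ℕ) < L := by omega
              exact_mod_cast h8
            have hj1 : (1 : ℝ) ≤ (j : ℝ) + 1 := by
              have := Nat.cast_nonneg (α := ℝ) j
              linarith
            have hhalf : ((1 : ℝ) / 2) ^ (j + 1) = 1 / 2 ^ (j + 1) := by
              rw [div_pow, one_pow]
            rw [hhalf, div_mul_eq_mul_div, mul_one_div, div_div]
            rw [div_add' _ _ _ (ne_of_gt hppos), div_mul_eq_mul_div,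
              div_le_div_iff₀ hppos (mul_pos h2pos hmpos)]
            have hkey : ((L : ℝ) + 1 * (p j : ℝ)) * ((j : ℝ) + 1) ≤
                (L : ℝ) * (((j : ℝ) + 1) * 2) := by
              nlinarith [hpLr, hj1, hLpos]
            have hkey2 : (L : ℝ) * (((j : ℝ) + 1) * 2) * (2 ^ (j + 1) * (m : ℝ)) ≤
                (L : ℝ) * (p j : ℝ) := by
              have h9 : (L : ℝ) * ((m : ℝ) * ((j : ℝ) + 1) ^ 2 * 2 ^ (j + 2)) ≤
                  (L : ℝ) * (p j : ℝ) :=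
                mul_le_mul_of_nonneg_left hpbig (le_of_lt hLpos)
              have h10 : (L : ℝ) * (((j : ℝ) + 1) * 2) * (2 ^ (j + 1) * (m : ℝ)) ≤
                  (L : ℝ) * ((m : ℝ) * ((j : ℝ) + 1) ^ 2 * 2 ^ (j + 2)) := by
                have hpow2 : (2 : ℝ) ^ (j + 2) = 2 ^ (j + 1) * 2 := by ring
                rw [hpow2]
                have hbase : (0 : ℝ) ≤ 2 * (L : ℝ) * (m : ℝ) * 2 ^ (j + 1) * ((j : ℝ) + 1) := by
                  have h0j : (0 : ℝ) ≤ (j : ℝ) + 1 := by positivity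
                  have h0L : (0 : ℝ) ≤ (L : ℝ) := le_of_lt hLpos
                  have h0m : (0 : ℝ) ≤ (m : ℝ) := le_of_lt hmpos
                  positivity
                nlinarith [mul_le_mul_of_nonneg_left hj1 hbase]
              linarith
            calc ((L : ℝ) + 1 * (p j : ℝ)) * ((j : ℝ) + 1) * (2 ^ (j + 1) * (m : ℝ))
                ≤ (L : ℝ) * (((j : ℝ) + 1) * 2) * (2 ^ (j + 1) * (m : ℝ)) := by
                  have hpos : (0:ℝ) < 2 ^ (j + 1) * (m : ℝ) := mul_pos h2pos hmpos
                  exact mul_le_mul_of_nonneg_right hkey (le_of_lt hpos)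
              _ ≤ (L : ℝ) * (p j : ℝ) := hkey2
          calc (((T.filter (fun x => p j ≤ x ∧ x % p j < j + 1)).card : ℝ))
              ≤ ((L / p j : ℕ) + 1 : ℝ) * ((j : ℝ) + 1) := hcast1
            _ ≤ ((L : ℝ) / (p j : ℝ) + 1) * ((j : ℝ) + 1) := by
                have hj0 : (0 : ℝ) ≤ (j : ℝ) + 1 := by positivity
                nlinarith [hcast2]
            _ ≤ ((L : ℝ) / m) * (1 / 2) ^ (j + 1) := hstep
        · have hempty : T.filter (fun x => p j ≤ x ∧ x % p j < j + 1) = ∅ := by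
            apply Finset.filter_eq_empty_iff.mpr
            intro x hxT
            have hxL : x < 0 + L := (Finset.mem_Ico.mp hxT).2
            intro hcontra
            obtain ⟨h1, _⟩ := hcontra
            omega
          rw [hempty]
          simp only [Finset.card_empty, Nat.cast_zero]
          positivity
      have hbadsum : (((T.filter (fun n => ¬ n ∈ A)).card : ℝ)) ≤ (L : ℝ) / m := by
        have hstep1 : ((T.filter (fun n => ¬ n ∈ A)).card : ℝ) ≤
            (((Finset.range L).biUnion
              (fun j => T.filter (fun x => p j ≤ x ∧ x % p j < j + 1))).card : ℝ) := by
          exact_mod_cast Finset.card_le_card hsub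
        have hstep2 : (((Finset.range L).biUnion
              (fun j => T.filter (fun x => p j ≤ x ∧ x % p j < j + 1))).card : ℝ) ≤
            ∑ j ∈ Finset.range L,
              (((T.filter (fun x => p j ≤ x ∧ x % p j < j + 1)).card : ℝ)) := by
          have h11 := Finset.card_biUnion_le (s := Finset.range L)
            (t := fun j => T.filter (fun x => p j ≤ x ∧ x % p j < j + 1))
          calc (((Finset.range L).biUnion
                (fun j => T.filter (fun x => p j ≤ x ∧ x % p j < j + 1))).card : ℝ)
              ≤ ((∑ j ∈ Finset.range L,
                  (T.filter (fun x => p j ≤ x ∧ x % p j < j + 1)).card : ℕ) : ℝ) := by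
                exact_mod_cast h11
            _ = _ := by push_cast; rfl
        have hstep3 : ∑ j ∈ Finset.range L,
            (((T.filter (fun x => p j ≤ x ∧ x % p j < j + 1)).card : ℝ)) ≤
            ∑ j ∈ Finset.range L, ((L : ℝ) / m) * (1 / 2) ^ (j + 1) :=
          Finset.sum_le_sum (fun j _ => hcnt j)
        have hstep4 : ∑ j ∈ Finset.range L, ((L : ℝ) / m) * (1 / 2) ^ (j + 1) ≤ (L : ℝ) / m := by
          rw [← Finset.mul_sum]
          have hgeom : ∑ j ∈ Finset.range L, ((1 : ℝ) / 2) ^ (j + 1) ≤ 1 := by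
            have h5 : ∑ j ∈ Finset.range L, ((1 : ℝ) / 2) ^ (j + 1) =
                (1 / 2) * ∑ j ∈ Finset.range L, ((1 : ℝ) / 2) ^ j := by
              rw [Finset.mul_sum]
              apply Finset.sum_congr rfl
              intro j _
              rw [pow_succ]
              ring
            rw [h5]
            have h12 := sum_geometric_two_le L
            linarith
          have hLm : (0 : ℝ) ≤ (L : ℝ) / m := by positivity
          nlinarith
        linarith
      have hcastsplit : (((T.filter (fun n => n ∈ A)).card : ℝ)) =
          (L : ℝ) - (((T.filter (fun n => ¬ n ∈ A)).card : ℝ)) := by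
        have h13 : (((T.filter (fun n => n ∈ A)).card : ℕ) : ℝ)
            + (((T.filter (fun n => ¬ n ∈ A)).card : ℕ) : ℝ) = (L : ℝ) := by
          exact_mod_cast hsplit
        linarith
      rw [hcastsplit]
      have h14 : (1 - 1 / (m : ℝ)) * (L : ℝ) = (L : ℝ) - (L : ℝ) / m := by
        field_simp
      rw [h14]
      linarith
    have hg_ge : ∀ L : ℕ, 1 ≤ L → (1 - 1 / (m : ℝ)) ≤
        ⨆ M : ℕ, (((Finset.Ico M (M + L)).filter (fun n => n ∈ A)).card : ℝ) / L := by
      intro L hL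
      have hLpos : (0 : ℝ) < (L : ℝ) := by
        have h15 : (0:ℕ) < L := by omega
        exact_mod_cast h15
      have h0 : (1 - 1 / (m : ℝ)) ≤
          (((Finset.Ico 0 (0 + L)).filter (fun n => n ∈ A)).card : ℝ) / L := by
        rw [le_div_iff₀ hLpos]
        exact hcount L hL
      refine h0.trans ?_
      apply le_ciSup (f := fun M : ℕ =>
        (((Finset.Ico M (M + L)).filter (fun n => n ∈ A)).card : ℝ) / L)
      refine ⟨1, ?_⟩
      rintro y ⟨M, rfl⟩
      exact hbound1 L M
    have hfeq : ∀ (L M : ℕ),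
        (@Finset.filter ℕ (fun n => n ∈ A) (fun a => Classical.propDecidable (a ∈ A))
          (Finset.Ico M (M + L))) = ((Finset.Ico M (M + L)).filter (fun n => n ∈ A)) :=
      fun L M => Finset.filter_congr_decidable _ _ _
    have hud : upperBanachDensity A = Filter.limsup (fun L : ℕ =>
        ⨆ M : ℕ, (((Finset.Ico M (M + L)).filter (fun n => n ∈ A)).card : ℝ) / L)
        Filter.atTop := by
      unfold upperBanachDensity
      congr 1
      funext L
      congr 1
      funext M
      rw [hfeq]
    have hlimsup : (1 - 1 / (m : ℝ)) ≤ upperBanachDensity A := by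
      rw [hud]
      apply Filter.le_limsup_of_frequently_le
      · exact (Filter.eventually_atTop.mpr ⟨1, fun L hL => hg_ge L hL⟩).frequently
      · refine Filter.isBoundedUnder_of ⟨1, fun L => ?_⟩
        exact ciSup_le (fun M => hbound1 L M)
    have hfin : 1 - ε < 1 - 1 / (m : ℝ) := by linarith
    linarith
  · -- COMBINATORIAL PART
    intro k B t hnest hBinf H
    have hmono : ∀ i j : ℕ, i ≤ j → B j ⊆ B i := by
      intro i j hij
      induction j, hij using Nat.le_induction with
      | base => exact fun x hx => hx
      | succ j hij ih => exact fun x hx => ih (hnest j hx)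
    -- KEY: for every j, infinitely many elements of B (p j) are divisible by p j
    have hdiv : ∀ j : ℕ, {b : ℕ | b ∈ B (p j) ∧ p j ∣ b}.Infinite := by
      intro j
      set P := p j with hPdef
      have hPprime : P.Prime := hpp j
      have hP2 : 2 ≤ P := hPprime.two_le
      by_contra hfin
      rw [Set.not_infinite] at hfin
      have hS : {b : ℕ | b ∈ B P ∧ ¬ P ∣ b}.Infinite := by
        by_contra hSfin
        rw [Set.not_infinite] at hSfin
        have hsub : B P ⊆ {b : ℕ | b ∈ B P ∧ P ∣ b} ∪ {b : ℕ | b ∈ B P ∧ ¬ P ∣ b} := by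
          intro b hb
          by_cases hd : P ∣ b
          · exact Or.inl ⟨hb, hd⟩
          · exact Or.inr ⟨hb, hd⟩
        exact (hBinf P) ((hfin.union hSfin).subset hsub)
      have hpig : ∃ r, r < P ∧ {b : ℕ | (b ∈ B P ∧ ¬ P ∣ b) ∧ b % P = r}.Infinite := by
        by_contra hcon
        push_neg at hcon
        have hsub2 : {b : ℕ | b ∈ B P ∧ ¬ P ∣ b} ⊆
            ⋃ r ∈ {r : ℕ | r < P}, {b : ℕ | (b ∈ B P ∧ ¬ P ∣ b) ∧ b % P = r} := by
          intro b hb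
          exact Set.mem_biUnion (Nat.mod_lt b (by omega) : b % P ∈ {r : ℕ | r < P}) ⟨hb, rfl⟩
        have hfin2 : (⋃ r ∈ {r : ℕ | r < P},
            {b : ℕ | (b ∈ B P ∧ ¬ P ∣ b) ∧ b % P = r}).Finite := by
          apply Set.Finite.biUnion (Set.finite_lt_nat P)
          intro r hr
          exact hcon r hr
        exact hS (hfin2.subset hsub2)
      obtain ⟨r, hrP, hrinf⟩ := hpig
      have hr0 : r ≠ 0 := by
        intro h0
        subst h0
        obtain ⟨b, hb⟩ := hrinf.nonempty
        exact hb.1.2 (Nat.dvd_of_mod_eq_zero hb.2)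
      haveI : Fact P.Prime := ⟨hPprime⟩
      haveI : NeZero P := ⟨by omega⟩
      have hu : ((r : ZMod P)) ≠ 0 := by
        rw [Ne, ZMod.natCast_eq_zero_iff]
        intro hdvd
        have h16 := Nat.le_of_dvd (by omega) hdvd
        omega
      set a : ZMod P := (- (t P : ZMod P) - ((k P : ZMod P) + 1) * (r : ZMod P)) * (r : ZMod P)⁻¹
        with hadef
      have hval : a.val < P := ZMod.val_lt a
      have hau : a * (r : ZMod P) = - (t P : ZMod P) - ((k P : ZMod P) + 1) * (r : ZMod P) := by
        rw [hadef, mul_assoc, inv_mul_cancel₀ hu, mul_one]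
      have hcast0 : (((k P + 1 + a.val) * r + t P : ℕ) : ZMod P) = 0 := by
        push_cast
        rw [ZMod.natCast_zmod_val]
        rw [add_mul, add_mul, hau]
        ring
      have hdvd0 : P ∣ ((k P + 1 + a.val) * r + t P) := by
        rwa [ZMod.natCast_eq_zero_iff] at hcast0
      have hmod0 : ((k P + 1 + a.val) * r + t P) % P = 0 := Nat.mod_eq_zero_of_dvd hdvd0
      have hC' : ({b : ℕ | (b ∈ B P ∧ ¬ P ∣ b) ∧ b % P = r} \ {b : ℕ | b < P}).Infinite :=
        hrinf.diff (Set.finite_lt_nat P)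
      obtain ⟨F, hFsub, hFcard⟩ := hC'.exists_subset_card_eq (k P + 1 + a.val)
      have hFB : ↑F ⊆ B P := fun b hb => ((hFsub hb).1).1.1
      have hFmod : ∀ b ∈ F, b % P = r := fun b hb => ((hFsub hb).1).2
      have hFge : ∀ b ∈ F, P ≤ b := fun b hb => not_lt.mp (hFsub hb).2
      have hsummod : (∑ i ∈ F, i) % P = ((k P + 1 + a.val) * r) % P := by
        rw [Finset.sum_nat_mod]
        have h6 : ∑ i ∈ F, i % P = F.card * r := by
          rw [Finset.sum_congr rfl hFmod, Finset.sum_const, smul_eq_mul]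
        rw [h6, hFcard]
      have hxmod : ((∑ i ∈ F, i) + t P) % P = 0 := by
        rw [Nat.add_mod, hsummod, ← Nat.add_mod]
        exact hmod0
      have hxge : P ≤ (∑ i ∈ F, i) + t P := by
        have hFne : F.Nonempty := Finset.card_pos.mp (by omega)
        obtain ⟨b, hb⟩ := hFne
        have h7 : b ≤ ∑ i ∈ F, i := Finset.single_le_sum (fun i _ => Nat.zero_le i) hb
        have h17 := hFge b hb
        omega
      have hxA : (∑ i ∈ F, i) + t P ∈ A :=
        H P (by omega) F hFB (by omega) (by omega)
      rw [hAdef] at hxA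
      exact hxA ⟨j, by rw [← hPdef]; exact hxge, by rw [← hPdef, hxmod]; omega⟩
    -- STEP B: catch at stage 1 with j := t 1
    set j₀ := t 1 with hj0def
    set P := p j₀ with hP0def
    have hPprime : P.Prime := hpp j₀
    have hP2 : 2 ≤ P := hPprime.two_le
    have ht1P : t 1 < P := by
      have h18 := hpj_big j₀
      omega
    have hDinf : ({b : ℕ | b ∈ B P ∧ P ∣ b} \ {b : ℕ | b < P}).Infinite :=
      (hdiv j₀).diff (Set.finite_lt_nat P)
    obtain ⟨F, hFsub, hFcard⟩ := hDinf.exists_subset_card_eq (max (k 1) 1)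
    have hFB1 : ↑F ⊆ B 1 := by
      intro b hb
      exact hmono 1 P (by omega) ((hFsub hb).1.1)
    have hFmod : ∀ b ∈ F, b % P = 0 := fun b hb => Nat.mod_eq_zero_of_dvd ((hFsub hb).1.2)
    have hFge : ∀ b ∈ F, P ≤ b := fun b hb => not_lt.mp (hFsub hb).2
    have hsummod : (∑ i ∈ F, i) % P = 0 := by
      rw [Finset.sum_nat_mod]
      have h8 : ∑ i ∈ F, i % P = 0 := Finset.sum_eq_zero hFmod
      rw [h8]
      simp
    have hxmod : ((∑ i ∈ F, i) + t 1) % P = t 1 := by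
      rw [Nat.add_mod, hsummod]
      simp [Nat.mod_eq_of_lt ht1P]
    have hxge : P ≤ (∑ i ∈ F, i) + t 1 := by
      have hFne : F.Nonempty := Finset.card_pos.mp (by omega)
      obtain ⟨b, hb⟩ := hFne
      have h9 : b ≤ ∑ i ∈ F, i := Finset.single_le_sum (fun i _ => Nat.zero_le i) hb
      have h19 := hFge b hb
      omega
    have hxA : (∑ i ∈ F, i) + t 1 ∈ A :=
      H 1 le_rfl F hFB1 (by omega) (by omega)
    rw [hAdef] at hxA
    exact hxA ⟨j₀, by rw [← hP0def]; exact hxge, by rw [← hP0def, hxmod]; omega⟩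
end

section
/- Let (p_n) be an increasing sequence of primes with ∑ n/p_n < ε, and let A = ℕ \ ⋃_{n≥1} ⋃_{j=0}^{n−1} (p_n ℕ + j). Then the upper Banach density of A is greater than 1 − ε. -/
open Filter
open scoped Classical BigOperators

theorem stmt1 (ε : ℝ) (hε : 0 < ε) (p : ℕ → ℕ)
    (hp : ∀ n, 1 ≤ n → (p n).Prime) (hmono : StrictMono p)
    (hsum : Summable (fun n : ℕ => (n : ℝ) / p n))
    (hlt : (∑' n : ℕ, (n : ℝ) / p n) < ε)
    (A : Set ℕ)
    (hA : A = {m : ℕ | ¬ ∃ n, 1 ≤ n ∧ ∃ j < n, ∃ q, 1 ≤ q ∧ m = p n * q + j}) :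
    1 - ε < upperBanachDensity A := by
  set S := ∑' n : ℕ, (n : ℝ) / p n with hSdef
  have hS0 : 0 ≤ S := tsum_nonneg fun n => div_nonneg (by positivity) (by positivity)
  set P : ℕ → Prop := fun m => ∃ n, 1 ≤ n ∧ ∃ j < n, ∃ q, 1 ≤ q ∧ m = p n * q + j with hP
  have hmem : ∀ m, m ∈ A ↔ ¬ P m := by
    intro m; rw [hA]; rfl
  have hpn : ∀ n, 1 ≤ n → 0 < p n := fun n hn => (hp n hn).pos
  -- count of bad elements in [0, L)
  have bad_card : ∀ L : ℕ, (((Finset.range L).filter P).card : ℝ) ≤ L * S := by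
    intro L
    have hsub : (Finset.range L).filter P ⊆
        (Finset.Ico 1 L).biUnion (fun n => (Finset.range n).biUnion
          (fun j => (Finset.Icc 1 (L / p n)).image (fun q => p n * q + j))) := by
      intro m hm
      simp only [Finset.mem_filter, Finset.mem_range] at hm
      obtain ⟨hmL, n, hn, j, hjn, q, hq, rfl⟩ := hm
      have hpnq : p n * q < L := lt_of_le_of_lt (Nat.le_add_right _ _) hmL
      have hnpn : n ≤ p n := hmono.le_apply
      have hnL : n < L := lt_of_le_of_lt
        (le_trans hnpn (Nat.le_mul_of_pos_right _ hq)) hpnq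
      have hqle : q ≤ L / p n := by
        rw [Nat.le_div_iff_mul_le (hpn n hn), mul_comm]
        omega
      simp only [Finset.mem_biUnion, Finset.mem_Ico, Finset.mem_range, Finset.mem_image,
        Finset.mem_Icc]
      exact ⟨n, ⟨hn, hnL⟩, j, hjn, q, ⟨hq, hqle⟩, rfl⟩
    have hnat : ((Finset.range L).filter P).card ≤
        ∑ n ∈ Finset.Ico 1 L, n * (L / p n) := by
      refine le_trans (Finset.card_le_card hsub) ?_
      refine le_trans (Finset.card_biUnion_le) (Finset.sum_le_sum fun n _ => ?_)
      refine le_trans (Finset.card_biUnion_le) ?_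
      calc ∑ j ∈ Finset.range n, ((Finset.Icc 1 (L / p n)).image (fun q => p n * q + j)).card
          ≤ ∑ j ∈ Finset.range n, (L / p n) := by
            refine Finset.sum_le_sum fun j _ => ?_
            refine le_trans Finset.card_image_le ?_
            simp [Nat.card_Icc]
        _ = n * (L / p n) := by simp [Finset.sum_const, Finset.card_range]
    calc (((Finset.range L).filter P).card : ℝ)
        ≤ ((∑ n ∈ Finset.Ico 1 L, n * (L / p n) : ℕ) : ℝ) := by exact_mod_cast hnat
      _ ≤ ∑ n ∈ Finset.Ico 1 L, (L : ℝ) * ((n : ℝ) / p n) := by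
          push_cast
          refine Finset.sum_le_sum fun n _ => ?_
          have h1 : ((L / p n : ℕ) : ℝ) ≤ (L : ℝ) / p n := Nat.cast_div_le
          have hn0 : (0:ℝ) ≤ (n:ℝ) := by positivity
          calc (n : ℝ) * ((L / p n : ℕ) : ℝ) ≤ (n : ℝ) * ((L:ℝ) / p n) :=
                mul_le_mul_of_nonneg_left h1 hn0
            _ = (L : ℝ) * ((n : ℝ) / p n) := by ring
      _ = (L : ℝ) * ∑ n ∈ Finset.Ico 1 L, (n : ℝ) / p n := by rw [Finset.mul_sum]
      _ ≤ (L : ℝ) * S := by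
          refine mul_le_mul_of_nonneg_left ?_ (by positivity)
          exact Summable.sum_le_tsum _ (fun i _ => div_nonneg (by positivity) (by positivity)) hsum
  -- per-L lower bound for the M = 0 window
  have key : ∀ L : ℕ, 1 ≤ L →
      1 - S ≤ (((Finset.Ico 0 (0 + L)).filter (fun n => n ∈ A)).card : ℝ) / L := by
    intro L hL
    have hL0 : (0:ℝ) < L := by exact_mod_cast hL
    have hIco : Finset.Ico 0 (0 + L) = Finset.range L := by
      rw [zero_add, Finset.range_eq_Ico]
    rw [hIco]
    have hfilter : (Finset.range L).filter (fun n => n ∈ A) =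
        (Finset.range L).filter (fun n => ¬ P n) := by
      apply Finset.filter_congr; intro x _; simp [hmem x]
    rw [hfilter]
    have hsplit : ((Finset.range L).filter (fun n => ¬ P n)).card =
        L - ((Finset.range L).filter P).card := by
      have := Finset.card_filter_add_card_filter_not (s := Finset.range L) (p := P)
      simp only [Finset.card_range] at this
      omega
    have hble : ((Finset.range L).filter P).card ≤ L :=
      le_trans (Finset.card_filter_le _ _) (by simp)
    rw [le_div_iff₀ hL0]
    have : ((((Finset.range L).filter (fun n => ¬ P n)).card : ℝ)) =
        (L : ℝ) - (((Finset.range L).filter P).card : ℝ) := by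
      rw [hsplit]; push_cast [hble]; ring
    rw [this]
    have := bad_card L
    nlinarith [bad_card L]
  -- the function inside the limsup
  set f : ℕ → ℝ := fun L =>
    ⨆ M : ℕ, (((Finset.Ico M (M + L)).filter (fun n => n ∈ A)).card : ℝ) / L with hf
  have hf_le_one : ∀ L, f L ≤ 1 := by
    intro L
    refine ciSup_le fun M => ?_
    rcases Nat.eq_zero_or_pos L with h0 | hpos
    · simp [h0]
    · have hL0 : (0:ℝ) < L := by exact_mod_cast hpos
      rw [div_le_one hL0]
      calc ((((Finset.Ico M (M + L)).filter (fun n => n ∈ A)).card : ℝ))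
          ≤ ((Finset.Ico M (M + L)).card : ℝ) := by
            exact_mod_cast Finset.card_filter_le _ _
        _ = (L : ℝ) := by simp
  have hbdd : ∀ L, BddAbove (Set.range fun M : ℕ =>
      (((Finset.Ico M (M + L)).filter (fun n => n ∈ A)).card : ℝ) / L) := by
    intro L
    refine ⟨1, ?_⟩
    rintro x ⟨M, rfl⟩
    rcases Nat.eq_zero_or_pos L with h0 | hpos
    · simp [h0]
    · have hL0 : (0:ℝ) < L := by exact_mod_cast hpos
      rw [div_le_one hL0]
      calc ((((Finset.Ico M (M + L)).filter (fun n => n ∈ A)).card : ℝ))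
          ≤ ((Finset.Ico M (M + L)).card : ℝ) := by
            exact_mod_cast Finset.card_filter_le _ _
        _ = (L : ℝ) := by simp
  have hf_ge : ∀ L, 1 ≤ L → 1 - S ≤ f L := by
    intro L hL
    refine le_trans (key L hL) ?_
    exact le_ciSup (hbdd L) 0
  have hlimsup : 1 - S ≤ upperBanachDensity A := by
    have hfreq : ∃ᶠ L in atTop, 1 - S ≤ f L :=
      (Filter.eventually_atTop.mpr ⟨1, hf_ge⟩).frequently
    have hbd : IsBoundedUnder (· ≤ ·) atTop f :=
      ⟨1, Filter.eventually_map.mpr (Filter.Eventually.of_forall hf_le_one)⟩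
    exact le_limsup_of_frequently_le hfreq hbd
  have : 1 - ε < 1 - S := by linarith
  linarith
end

section
/- Let X be a compact metric space, T : X → X a homeomorphism, (U_k)_{k∈ℕ} a sequence of open subsets of X, and (x_k)_{k∈ℕ₀} an infinite Erdős progression with x_k ∈ U_k for every k ≥ 1. Then there exists a nested sequence of infinite sets B_1 ⊇ B_2 ⊇ ⋯ ⊆ ℕ such that for every k, every sum ∑_{n∈F} n with F ⊆ B_k and |F| = k belongs to {m ∈ ℕ : T^m x_0 ∈ U_k}. -/
open Filter
open scoped BigOperators

theorem stmt4 {X : Type} [MetricSpace X] [CompactSpace X] (T : X ≃ₜ X)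
    (U : ℕ → Set X) (hU : ∀ k, 1 ≤ k → IsOpen (U k))
    (x : ℕ → X) (c : ℕ → ℕ) (hc : StrictMono c)
    (hEP : ∀ k : ℕ, Filter.Tendsto (fun n => (⇑T)^[c n] (x k))
      Filter.atTop (nhds (x (k + 1))))
    (hx : ∀ k, 1 ≤ k → x k ∈ U k) :
    ∃ B : ℕ → Set ℕ,
      (∀ k, (B k).Infinite) ∧ (∀ k, B (k + 1) ⊆ B k) ∧
      (∀ k, B k ⊆ {n | 1 ≤ n}) ∧
      ∀ k, 1 ≤ k → ∀ F : Finset ℕ, ↑F ⊆ B k → F.card = k →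
        (⇑T)^[∑ n ∈ F, n] (x 0) ∈ U k := by
  classical
  -- choose radii r k with ball (x k) (r k) ⊆ U k
  have hr : ∀ k, 1 ≤ k → ∃ ρ, 0 < ρ ∧ Metric.ball (x k) ρ ⊆ U k := by
    intro k hk
    rcases Metric.isOpen_iff.1 (hU k hk) _ (hx k hk) with ⟨ρ, hρ, hball⟩
    exact ⟨ρ, hρ, hball⟩
  choose! r hrpos hrball using hr
  -- the step existence lemma
  have hstep : ∀ (q : ℕ × ℝ) (m : ℕ), ∃ p : ℕ × ℝ, 0 < p.2 ∧ (0 < q.2 →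
      q.1 < p.1 ∧ p.2 ≤ q.2 ∧ p.2 ≤ r (m + 1) ∧
      (∀ k, k ≤ m → ∀ y : X, dist y (x k) < p.2 →
        dist ((⇑T)^[c q.1] y) ((⇑T)^[c q.1] (x k)) < q.2 / 2) ∧
      (∀ k, k ≤ m → dist ((⇑T)^[c p.1] (x k)) (x (k + 1)) < p.2 / 2)) := by
    intro q m
    by_cases hq : 0 < q.2
    · -- continuity moduli for T^[c q.1]
      have hcont : Continuous ((⇑T)^[c q.1]) := T.continuous.iterate _
      have hδ : ∀ k : ℕ, ∃ δ, 0 < δ ∧ ∀ y : X, dist y (x k) < δ →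
          dist ((⇑T)^[c q.1] y) ((⇑T)^[c q.1] (x k)) < q.2 / 2 := by
        intro k
        have h := hcont.continuousAt (x := x k)
        rw [Metric.continuousAt_iff] at h
        rcases h (q.2 / 2) (by positivity) with ⟨δ, hδpos, hh⟩
        exact ⟨δ, hδpos, fun y hy => hh hy⟩
      choose δ hδpos hδ using hδ
      set η : ℝ := min (min q.2 (r (m + 1))) ((Finset.range (m + 1)).inf' (by simp) δ)
        with hη
      have hηpos : 0 < η := by
        apply lt_min (lt_min hq (hrpos (m + 1) (by omega)))
        rw [Finset.lt_inf'_iff]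
        intro i _
        exact hδpos i
      -- choose n' using the tendsto hypotheses
      have hN : ∀ k : ℕ, ∃ N, ∀ n ≥ N, dist ((⇑T)^[c n] (x k)) (x (k + 1)) < η / 2 := by
        intro k
        rcases Metric.tendsto_atTop.1 (hEP k) (η / 2) (by positivity) with ⟨N, hNn⟩
        exact ⟨N, hNn⟩
      choose N hNspec using hN
      set n' : ℕ := q.1 + 1 + (Finset.range (m + 1)).sup N with hn'
      refine ⟨(n', η), hηpos, fun _ => ⟨by omega, ?_, ?_, ?_, ?_⟩⟩
      · exact le_trans (min_le_left _ _) (min_le_left _ _)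
      · exact le_trans (min_le_left _ _) (min_le_right _ _)
      · intro k hk y hy
        apply hδ k
        calc dist y (x k) < η := hy
          _ ≤ _ := le_trans (min_le_right _ _)
              (Finset.inf'_le _ (Finset.mem_range.2 (by omega)))
      · intro k hk
        apply hNspec k
        calc N k ≤ (Finset.range (m + 1)).sup N :=
              Finset.le_sup (Finset.mem_range.2 (by omega))
          _ ≤ n' := by omega
    · exact ⟨(q.1 + 1, 1), one_pos, fun h => absurd h hq⟩
  -- build the sequence by recursion
  obtain ⟨g, hg0, hgs⟩ : ∃ g : ℕ → ℕ × ℝ, g 0 = (0, 1) ∧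
      ∀ m, g (m + 1) = (hstep (g m) m).choose := by
    refine ⟨fun m => Nat.rec (0, 1) (fun m p => (hstep p m).choose) m, rfl, fun m => rfl⟩
  have hpos : ∀ m, 0 < (g m).2 := by
    intro m
    induction m with
    | zero => rw [hg0]; exact one_pos
    | succ m ih => rw [hgs]; exact (hstep (g m) m).choose_spec.1
  have hP : ∀ m, (g m).1 < (g (m + 1)).1 ∧ (g (m + 1)).2 ≤ (g m).2 ∧
      (g (m + 1)).2 ≤ r (m + 1) ∧
      (∀ k, k ≤ m → ∀ y : X, dist y (x k) < (g (m + 1)).2 →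
        dist ((⇑T)^[c (g m).1] y) ((⇑T)^[c (g m).1] (x k)) < (g m).2 / 2) ∧
      (∀ k, k ≤ m → dist ((⇑T)^[c (g (m + 1)).1] (x k)) (x (k + 1)) < (g (m + 1)).2 / 2) := by
    intro m
    have h := (hstep (g m) m).choose_spec.2 (hpos m)
    rw [← hgs m] at h
    exact h
  -- basic monotonicity facts
  have hnmono : StrictMono (fun m => (g m).1) := strictMono_nat_of_lt_succ (fun m => (hP m).1)
  have hanti : Antitone (fun m => (g m).2) := antitone_nat_of_succ_le (fun m => (hP m).2.1)
  set b : ℕ → ℕ := fun m => c ((g m).1) with hb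
  have hbmono : StrictMono b := hc.comp hnmono
  have hbge : ∀ m, m ≤ b m := fun m =>
    le_trans hnmono.le_apply hc.le_apply
  -- the key claim
  have hkey : ∀ (k : ℕ) (M : Finset ℕ) (hne : M.Nonempty), M.card = k + 1 →
      (∀ m ∈ M, k + 1 ≤ m) →
      dist ((⇑T)^[∑ m ∈ M, b m] (x 0)) (x (k + 1)) < (g (M.min' hne)).2 := by
    intro k
    induction k with
    | zero =>
      intro M hne hcard hlb
      obtain ⟨a, rfl⟩ := Finset.card_eq_one.1 hcard
      have ha : 1 ≤ a := hlb a (Finset.mem_singleton_self a)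
      rw [Finset.sum_singleton, Finset.min'_singleton]
      obtain ⟨m, rfl⟩ : ∃ m, a = m + 1 := ⟨a - 1, by omega⟩
      have h := (hP m).2.2.2.2 0 (by omega)
      calc dist ((⇑T)^[b (m + 1)] (x 0)) (x 1) < (g (m + 1)).2 / 2 := h
        _ < (g (m + 1)).2 := by have := hpos (m + 1); linarith
    | succ k ih =>
      intro M hne hcard hlb
      set m₁ : ℕ := M.min' hne with hm₁
      have hm₁mem : m₁ ∈ M := M.min'_mem hne
      have hm₁lb : k + 2 ≤ m₁ := hlb m₁ hm₁mem
      set M' : Finset ℕ := M.erase m₁ with hM'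
      have hcard' : M'.card = k + 1 := by
        rw [hM', Finset.card_erase_of_mem hm₁mem, hcard]
        omega
      have hne' : M'.Nonempty := Finset.card_pos.1 (by omega)
      have hlb' : ∀ m ∈ M', k + 1 ≤ m := fun m hm =>
        le_trans (by omega) (hlb m (Finset.mem_of_mem_erase hm))
      have hmin' : m₁ + 1 ≤ M'.min' hne' := by
        rw [Nat.succ_le_iff, Finset.lt_min'_iff]
        intro a ha
        exact lt_of_le_of_ne (Finset.min'_le M a (Finset.mem_of_mem_erase ha))
          (Ne.symm (Finset.ne_of_mem_erase ha))
      have hsum : ∑ m ∈ M, b m = b m₁ + ∑ m ∈ M', b m :=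
        (Finset.add_sum_erase M b hm₁mem).symm
      have hIH : dist ((⇑T)^[∑ m ∈ M', b m] (x 0)) (x (k + 1)) < (g (M'.min' hne')).2 :=
        ih M' hne' hcard' hlb'
      have hIH' : dist ((⇑T)^[∑ m ∈ M', b m] (x 0)) (x (k + 1)) < (g (m₁ + 1 - 1 + 1)).2 := by
        have : (g (M'.min' hne')).2 ≤ (g (m₁ + 1 - 1 + 1)).2 := hanti (by omega)
        linarith
      obtain ⟨m₀, hm₀⟩ : ∃ m₀, m₁ = m₀ + 1 := ⟨m₁ - 1, by omega⟩
      -- continuity step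
      have hstep1 : dist ((⇑T)^[c (g m₁).1] ((⇑T)^[∑ m ∈ M', b m] (x 0)))
          ((⇑T)^[c (g m₁).1] (x (k + 1))) < (g m₁).2 / 2 := by
        apply (hP m₁).2.2.2.1 (k + 1) (by omega)
        have : (g (m₁ + 1 - 1 + 1)).2 = (g (m₁ + 1)).2 := by norm_num
        rw [this] at hIH'
        exact hIH'
      -- nearness step
      have hstep2 : dist ((⇑T)^[c (g m₁).1] (x (k + 1))) (x (k + 2)) < (g m₁).2 / 2 := by
        have h := (hP m₀).2.2.2.2 (k + 1) (by omega)
        rw [← hm₀] at h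
        exact h
      rw [hsum, Function.iterate_add_apply]
      calc dist ((⇑T)^[b m₁] ((⇑T)^[∑ m ∈ M', b m] (x 0))) (x (k + 2))
          ≤ dist ((⇑T)^[b m₁] ((⇑T)^[∑ m ∈ M', b m] (x 0)))
              ((⇑T)^[b m₁] (x (k + 1))) + dist ((⇑T)^[b m₁] (x (k + 1))) (x (k + 2)) :=
            dist_triangle _ _ _
        _ < (g m₁).2 / 2 + (g m₁).2 / 2 := add_lt_add hstep1 hstep2
        _ = (g m₁).2 := by ring
  -- define the sets B
  refine ⟨fun k => b '' Set.Ici (max k 1), ?_, ?_, ?_, ?_⟩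
  · intro k
    exact (Set.Ici_infinite _).image (hbmono.injective.injOn.mono (Set.subset_univ _))
  · intro k
    exact Set.image_mono (Set.Ici_subset_Ici.2 (by omega))
  · rintro k _ ⟨m, hm, rfl⟩
    have : 1 ≤ m := le_trans (le_max_right _ _) hm
    exact le_trans this (hbge m)
  · intro k hk F hFB hcard
    -- extract index set M
    have hpre : ∀ f ∈ F, ∃ m, max k 1 ≤ m ∧ b m = f := by
      intro f hf
      rcases hFB hf with ⟨m, hm, hbm⟩
      exact ⟨m, hm, hbm⟩
    choose! φ hφ1 hφ2 using hpre
    have hinj : Set.InjOn φ F := by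
      intro a ha b' hb' hab
      rw [← hφ2 a ha, ← hφ2 b' hb', hab]
    set M : Finset ℕ := F.image φ with hM
    have hcardM : M.card = k := by
      rw [hM, Finset.card_image_of_injOn hinj, hcard]
    have hsumM : ∑ m ∈ M, b m = ∑ n ∈ F, n := by
      rw [hM, Finset.sum_image (fun a ha b' hb' h => hinj ha hb' h)]
      exact Finset.sum_congr rfl (fun f hf => hφ2 f hf)
    have hlbM : ∀ m ∈ M, k ≤ m := by
      intro m hm
      rw [hM, Finset.mem_image] at hm
      rcases hm with ⟨f, hf, rfl⟩
      exact le_trans (le_max_left _ _) (hφ1 f hf)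
    obtain ⟨k', rfl⟩ : ∃ k', k = k' + 1 := ⟨k - 1, by omega⟩
    have hneM : M.Nonempty := Finset.card_pos.1 (by omega)
    have h := hkey k' M hneM hcardM hlbM
    rw [hsumM] at h
    apply hrball (k' + 1) hk
    rw [Metric.mem_ball]
    have h1 : (g (M.min' hneM)).2 ≤ (g (k' + 1)).2 := hanti (hlbM _ (M.min'_mem hneM))
    have h2 : (g (k' + 1)).2 ≤ r (k' + 1) := by
      have := (hP k').2.2.1
      simpa using this
    linarith
end

section
/- There exists a set A ⊆ ℕ with positive upper Banach density such that there is no infinite set B ⊆ ℕ and bounded sequence (t_k) of natural numbers for which, for every k, the set of sums ∑_{n∈F} n with F ⊆ B + s_k (for some sequence s_k), 1 ≤ |F| ≤ k, is contained in A − t_k. In particular the shift sequence (t_k) in the density finite sums theorem with auxiliary shifts cannot in general be taken bounded. -/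
open Filter
open scoped Classical BigOperators

/-- The witnessing set. -/
def myA : Set ℕ := {m | ∀ n, 1 ≤ n → 4 ^ n ≤ m → n ≤ m % 4 ^ n}

lemma sumT (N : ℕ) :
    9 * (∑ n ∈ Finset.Icc 1 N, n * 4 ^ (N - n)) + 3 * N + 4 = 4 ^ (N + 1) := by
  induction N with
  | zero => simp
  | succ N ih =>
    have h : ∑ n ∈ Finset.Icc 1 (N + 1), n * 4 ^ (N + 1 - n)
        = 4 * (∑ n ∈ Finset.Icc 1 N, n * 4 ^ (N - n)) + (N + 1) := by
      rw [Finset.sum_Icc_succ_top (by omega : 1 ≤ N + 1), Finset.mul_sum]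
      congr 1
      · apply Finset.sum_congr rfl
        intro n hn
        simp only [Finset.mem_Icc] at hn
        have hh : N + 1 - n = (N - n) + 1 := by omega
        rw [hh, pow_succ]; ring
      · simp
    have h4 : 4 ^ (N + 2) = 4 * 4 ^ (N + 1) := by ring
    omega

lemma bad_card (N n : ℕ) (hn : n ≤ N) :
    ((Finset.range (4 ^ N)).filter (fun r => r % 4 ^ n < n)).card ≤ n * 4 ^ (N - n) := by
  have key : ((Finset.range (4 ^ N)).filter (fun r => r % 4 ^ n < n)).card
      ≤ ((Finset.range n) ×ˢ (Finset.range (4 ^ (N - n)))).card := by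
    apply Finset.card_le_card_of_injOn (fun r => (r % 4 ^ n, r / 4 ^ n))
    · intro r hr
      simp only [Finset.mem_coe] at hr ⊢
      simp only [Finset.mem_filter, Finset.mem_range] at hr
      simp only [Finset.mem_product, Finset.mem_range]
      refine ⟨hr.2, ?_⟩
      have hpow : 4 ^ N = 4 ^ (N - n) * 4 ^ n := by
        rw [← pow_add]; congr 1; omega
      exact Nat.div_lt_of_lt_mul (by rw [mul_comm]; rw [← hpow]; exact hr.1)
    · intro a _ c _ hac
      simp only [Prod.mk.injEq] at hac
      have ha : a = 4 ^ n * (a / 4 ^ n) + a % 4 ^ n := (Nat.div_add_mod a _).symm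
      rw [ha, hac.1, hac.2, Nat.div_add_mod]
  simpa [Finset.card_product] using key

lemma six_le (N : ℕ) (hN : 2 ≤ N) : 6 * N + 5 ≤ 2 * 4 ^ N := by
  induction N with
  | zero => omega
  | succ N ih =>
    rcases Nat.lt_or_ge N 2 with h | h
    · interval_cases N <;> simp_all
    · have := ih h
      have h4 : 4 ^ (N + 1) = 4 * 4 ^ N := by ring
      have : 1 ≤ 4 ^ N := Nat.one_le_pow _ _ (by norm_num)
      omega

def goodPred (N r : ℕ) : Prop := N + 1 ≤ r ∧ ∀ n, 1 ≤ n → n ≤ N → n ≤ r % 4 ^ n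

lemma good_card (N : ℕ) (hN : 2 ≤ N) :
    4 ^ N ≤ 3 * ((Finset.range (4 ^ N)).filter (goodPred N)).card := by
  set good := (Finset.range (4 ^ N)).filter (goodPred N) with hgood
  set bad := (Finset.Icc 1 N).biUnion
      (fun n => (Finset.range (4 ^ N)).filter (fun r => r % 4 ^ n < n)) with hbad
  have hsub : Finset.range (4 ^ N) ⊆ good ∪ (Finset.range (N + 1) ∪ bad) := by
    intro r hr
    by_cases hg : goodPred N r
    · refine Finset.mem_union_left _ ?_
      rw [hgood, Finset.mem_filter]
      exact ⟨hr, hg⟩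
    · refine Finset.mem_union_right _ ?_
      rw [goodPred, not_and_or] at hg
      push_neg at hg
      rcases hg with hg | hg
      · exact Finset.mem_union_left _ (Finset.mem_range.2 (by omega))
      · obtain ⟨n, hn1, hn2, hn3⟩ := hg
        refine Finset.mem_union_right _ (Finset.mem_biUnion.2 ⟨n, Finset.mem_Icc.2 ⟨hn1, hn2⟩, ?_⟩)
        exact Finset.mem_filter.2 ⟨hr, by omega⟩
  have h1 : 4 ^ N ≤ good.card + ((N + 1) + ∑ n ∈ Finset.Icc 1 N, n * 4 ^ (N - n)) := by
    calc 4 ^ N = (Finset.range (4 ^ N)).card := (Finset.card_range _).symm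
    _ ≤ (good ∪ (Finset.range (N + 1) ∪ bad)).card := Finset.card_le_card hsub
    _ ≤ good.card + (Finset.range (N + 1) ∪ bad).card := Finset.card_union_le _ _
    _ ≤ good.card + ((Finset.range (N + 1)).card + bad.card) := by
        have := Finset.card_union_le (Finset.range (N + 1)) bad; omega
    _ ≤ good.card + ((N + 1) + ∑ n ∈ Finset.Icc 1 N, n * 4 ^ (N - n)) := by
        have hb : bad.card ≤ ∑ n ∈ Finset.Icc 1 N, n * 4 ^ (N - n) := by
          refine le_trans (Finset.card_biUnion_le) ?_
          apply Finset.sum_le_sum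
          intro n hn
          exact bad_card N n (Finset.mem_Icc.1 hn).2
        simp only [Finset.card_range]
        omega
  have h2 := sumT N
  have h3 := six_le N hN
  have h4 : 4 ^ (N + 1) = 4 * 4 ^ N := by ring
  omega

lemma mem_myA (N r : ℕ) (hr : r < 4 ^ N) (h1 : N + 1 ≤ r)
    (h2 : ∀ n, 1 ≤ n → n ≤ N → n ≤ r % 4 ^ n) : (4 ^ (N + 1) + r) ∈ myA := by
  intro n hn hle
  rcases Nat.lt_or_ge N n with h | h
  · rcases Nat.lt_or_ge n (N + 2) with h' | h'
    · -- n = N + 1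
      have hn' : n = N + 1 := by omega
      subst hn'
      have hrlt : r < 4 ^ (N + 1) := lt_of_lt_of_le hr (Nat.pow_le_pow_right (by norm_num) (by omega))
      rw [Nat.add_mod_left, Nat.mod_eq_of_lt hrlt]
      exact h1
    · -- n ≥ N + 2 : contradiction with 4^n ≤ m
      exfalso
      have hbig : 4 ^ (N + 2) ≤ 4 ^ n := Nat.pow_le_pow_right (by norm_num) h'
      have : 4 ^ (N + 2) = 16 * 4 ^ N := by ring
      have h5 : 4 ^ (N + 1) = 4 * 4 ^ N := by ring
      omega
  · -- n ≤ N
    have hpow : 4 ^ (N + 1) = 4 ^ n * 4 ^ (N + 1 - n) := by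
      rw [← pow_add]; congr 1; omega
    rw [hpow, Nat.mul_add_mod]
    exact h2 n hn h

lemma term_le_one (L M : ℕ) :
    (((Finset.Ico M (M + L)).filter (fun n => n ∈ myA)).card : ℝ) / L ≤ 1 := by
  rcases Nat.eq_zero_or_pos L with h | h
  · simp [h]
  · rw [div_le_one (by exact_mod_cast h)]
    have : ((Finset.Ico M (M + L)).filter (fun n => n ∈ myA)).card ≤ L := by
      refine le_trans (Finset.card_filter_le _ _) ?_
      rw [Nat.card_Ico]; omega
    exact_mod_cast this

lemma density_aux (N : ℕ) (hN : 2 ≤ N) :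
    (1 / 3 : ℝ) ≤ ⨆ M : ℕ,
      (((Finset.Ico M (M + 4 ^ N)).filter (fun n => n ∈ myA)).card : ℝ) / (4 ^ N : ℕ) := by
  have hb : BddAbove (Set.range fun M : ℕ =>
      (((Finset.Ico M (M + 4 ^ N)).filter (fun n => n ∈ myA)).card : ℝ) / (4 ^ N : ℕ)) := by
    refine ⟨1, ?_⟩
    rintro x ⟨M, rfl⟩
    exact term_le_one _ _
  refine le_trans ?_ (le_ciSup hb (4 ^ (N + 1)))
  have hinj : ((Finset.range (4 ^ N)).filter (goodPred N)).card
      ≤ ((Finset.Ico (4 ^ (N + 1)) (4 ^ (N + 1) + 4 ^ N)).filter (fun n => n ∈ myA)).card := by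
    apply Finset.card_le_card_of_injOn (fun r => 4 ^ (N + 1) + r)
    · intro r hr
      simp only [Finset.mem_coe] at hr ⊢
      rw [Finset.mem_filter] at hr
      obtain ⟨hr1, hr2⟩ := hr
      rw [Finset.mem_range] at hr1
      rw [Finset.mem_filter]
      exact ⟨Finset.mem_Ico.2 ⟨by omega, by omega⟩, mem_myA N r hr1 hr2.1 hr2.2⟩
    · intro a _ c _ h
      exact Nat.add_left_cancel h
  have hg := good_card N hN
  have hX : (0 : ℝ) < ((4 ^ N : ℕ) : ℝ) := by
    exact_mod_cast pow_pos (by norm_num) N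
  rw [div_le_div_iff₀ (by norm_num) hX]
  have hcount : (4 ^ N : ℕ)
      ≤ 3 * ((Finset.Ico (4 ^ (N + 1)) (4 ^ (N + 1) + 4 ^ N)).filter (fun n => n ∈ myA)).card := by
    omega
  have hcast : ((4 ^ N : ℕ) : ℝ)
      ≤ 3 * (((Finset.Ico (4 ^ (N + 1)) (4 ^ (N + 1) + 4 ^ N)).filter (fun n => n ∈ myA)).card : ℝ) := by
    exact_mod_cast hcount
  linarith

lemma density_pos : 0 < upperBanachDensity myA := by
  have hbound : IsBoundedUnder (· ≤ ·) atTop (fun L : ℕ =>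
      ⨆ M : ℕ, (((Finset.Ico M (M + L)).filter (fun n => n ∈ myA)).card : ℝ) / L) := by
    exact Filter.isBoundedUnder_of ⟨1, fun L => ciSup_le fun M => term_le_one L M⟩
  have hfreq : ∃ᶠ L : ℕ in atTop, (1 / 3 : ℝ) ≤
      ⨆ M : ℕ, (((Finset.Ico M (M + L)).filter (fun n => n ∈ myA)).card : ℝ) / L := by
    rw [Filter.frequently_atTop]
    intro a
    refine ⟨4 ^ (max a 2), ?_, density_aux _ (le_max_right a 2)⟩
    calc a ≤ max a 2 := le_max_left a 2
    _ ≤ 4 ^ (max a 2) := le_of_lt (Nat.lt_pow_self (by norm_num : 1 < 4))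
  have := Filter.le_limsup_of_frequently_le hfreq hbound
  calc (0 : ℝ) < 1 / 3 := by norm_num
  _ ≤ _ := this

lemma no_structure :
    ¬ ∃ (B : Set ℕ) (s t : ℕ → ℕ) (C : ℕ),
        B.Infinite ∧ (∀ k, t k ≤ C) ∧
        ∀ k, 1 ≤ k → ∀ F : Finset ℕ, ↑F ⊆ (fun b => b + s k) '' B →
          1 ≤ F.card → F.card ≤ k → (∑ n ∈ F, n) + t k ∈ myA := by
  rintro ⟨B, s, t, C, hB, htC, hFS⟩
  set p := 4 ^ (C + 1) with hp
  have hppos : 0 < p := pow_pos (by norm_num) _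
  have hCp : C + 1 < p := Nat.lt_pow_self (by norm_num : 1 < 4)
  have hB' : (B \ Set.Iio p).Infinite := hB.diff (Set.finite_Iio p)
  let e := hB'.natEmbedding
  let b : ℕ → ℕ := fun i => (e i : ℕ)
  have hbinj : Function.Injective b := fun i j h => e.injective (Subtype.ext h)
  have hbB : ∀ i, b i ∈ B := fun i => (e i).2.1
  have hbp : ∀ i, p ≤ b i := fun i => not_lt.1 (e i).2.2
  set S : ℕ → ℕ := fun i => ∑ x ∈ Finset.range i, (b x + s p) with hS
  have key2 : ∀ i j : ℕ, i < j → j ≤ p → S i % p = S j % p → False := by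
    intro i j hij hjp heq
    set Q := ∑ x ∈ Finset.Ico i j, (b x + s p) with hQdef
    have hQ : S i + Q = S j := by
      rw [hS]
      simp only
      simp only [Finset.range_eq_Ico]
      exact Finset.sum_Ico_consecutive (fun x => b x + s p) (Nat.zero_le i) (le_of_lt hij)
    have hQ0 : Q % p = 0 := by
      have h0 : S i + Q ≡ S i + 0 [MOD p] := by
        rw [add_zero, hQ]
        exact heq.symm
      have h1 := Nat.ModEq.add_left_cancel (Nat.ModEq.refl (S i)) h0
      simpa [Nat.ModEq] using h1
    have hQp : p ≤ Q := by
      calc p ≤ b i + s p := le_trans (hbp i) (Nat.le_add_right _ _)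
      _ ≤ Q := Finset.single_le_sum (f := fun x => b x + s p) (fun _ _ => Nat.zero_le _)
          (Finset.mem_Ico.2 ⟨le_refl i, hij⟩)
    set F := (Finset.Ico i j).image (fun x => b x + s p) with hF
    have hinj2 : ∀ x ∈ Finset.Ico i j, ∀ y ∈ Finset.Ico i j,
        b x + s p = b y + s p → x = y := fun a _ c _ h => hbinj (by omega)
    have hcard : F.card = j - i := by
      rw [hF, Finset.card_image_of_injOn fun a ha c hc h => hinj2 a ha c hc h, Nat.card_Ico]
    have hsum : ∑ n ∈ F, n = Q := by
      rw [hF, Finset.sum_image hinj2]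
    have hsub : ↑F ⊆ (fun x => x + s p) '' B := by
      intro m hm
      rw [hF] at hm
      simp only [Finset.coe_image, Set.mem_image, Finset.mem_coe] at hm
      obtain ⟨x, _, rfl⟩ := hm
      exact ⟨b x, hbB x, rfl⟩
    have hmem := hFS p (by omega) F hsub (by omega) (by omega)
    rw [hsum] at hmem
    have ht : t p < p := by have := htC p; omega
    have h4 : (Q + t p) % p = t p := by
      obtain ⟨c, hc⟩ : p ∣ Q := Nat.dvd_of_mod_eq_zero hQ0
      rw [hc, Nat.mul_add_mod, Nat.mod_eq_of_lt ht]
    have hge : 4 ^ (C + 1) ≤ Q + t p := hp ▸ le_trans hQp (Nat.le_add_right Q (t p))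
    have hmemA := hmem (C + 1) (by omega) hge
    rw [← hp, h4] at hmemA
    have := htC p
    omega
  obtain ⟨i, hi, j, hj, hne, heq⟩ :=
    Finset.exists_ne_map_eq_of_card_lt_of_maps_to
      (show (Finset.range p).card < (Finset.range (p + 1)).card by simp)
      (fun i _ => Finset.mem_range.2 (Nat.mod_lt (S i) hppos))
  rw [Finset.mem_range] at hi hj
  rcases hne.lt_or_gt with h | h
  · exact key2 i j h (by omega) heq
  · exact key2 j i h (by omega) heq.symm

theorem stmt5 :
    ∃ A : Set ℕ, 0 < upperBanachDensity A ∧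
      ¬ ∃ (B : Set ℕ) (s t : ℕ → ℕ) (C : ℕ),
        B.Infinite ∧ (∀ k, t k ≤ C) ∧
        ∀ k, 1 ≤ k → ∀ F : Finset ℕ, ↑F ⊆ (fun b => b + s k) '' B →
          1 ≤ F.card → F.card ≤ k → (∑ n ∈ F, n) + t k ∈ A := by
  exact ⟨myA, density_pos, no_structure⟩
end

section
/- Suppose A ⊆ ℕ has the property that there exist an infinite set B ⊆ ℕ and a sequence (t_k) of natural numbers such that for every k, every sum of exactly k distinct elements of B lies in A − t_k. Then there exists a sequence (B_n) of infinite subsets of ℕ such that B_1 + B_2 + ⋯ + B_k ⊆ A for every k ∈ ℕ. -/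
open scoped BigOperators

theorem stmt6 (A : Set ℕ) (B : Set ℕ) (hB : B.Infinite) (t : ℕ → ℕ)
    (h : ∀ k, 1 ≤ k → ∀ F : Finset ℕ, ↑F ⊆ B → F.card = k →
      (∑ n ∈ F, n) + t k ∈ A) :
    ∃ Bs : ℕ → Set ℕ, (∀ n, 1 ≤ n → (Bs n).Infinite) ∧
      ∀ k, 1 ≤ k → ∀ g : ℕ → ℕ, (∀ i, 1 ≤ i → i ≤ k → g i ∈ Bs i) →
        (∑ i ∈ Finset.Icc 1 k, g i) ∈ A := by
  classical
  -- Step 1: a greedy sequence M with t (M k) nondecreasing (k ≥ 1)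
  have key : ∀ N : ℕ, ∃ n, N < n ∧ ∀ m, N < m → t n ≤ t m := by
    intro N
    have hne : (t '' {m | N < m}).Nonempty := ⟨t (N + 1), N + 1, by simp, rfl⟩
    obtain ⟨n, hn, hval⟩ := Nat.sInf_mem hne
    exact ⟨n, hn, fun m hm => hval ▸ Nat.sInf_le ⟨m, hm, rfl⟩⟩
  obtain ⟨M, hM0, hMlt, hMmin⟩ : ∃ M : ℕ → ℕ, M 0 = 0 ∧ (∀ k, M k < M (k + 1)) ∧
      ∀ k m, M k < m → t (M (k + 1)) ≤ t m :=
    ⟨fun k => Nat.rec 0 (fun _ prev => Classical.choose (key prev)) k, rfl,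
      fun k => (Classical.choose_spec (key _)).1,
      fun k m hm => (Classical.choose_spec (key _)).2 m hm⟩
  have hMs : StrictMono M := strictMono_nat_of_lt_succ hMlt
  have hM1 : ∀ k, 1 ≤ k → 1 ≤ M k := by
    intro k hk
    have := hMs (show 0 < k from hk)
    omega
  have ht : ∀ k, 1 ≤ k → t (M k) ≤ t (M (k + 1)) := by
    rintro (_ | j) hk
    · omega
    · exact hMmin j (M (j + 2)) (hMs (by omega))
  -- Step 2: elements of B indexed by pairs
  set b : ℕ → ℕ := fun n => ((Set.Infinite.natEmbedding B hB) n : ℕ) with hb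
  have hbinj : Function.Injective b :=
    fun x y hxy => (Set.Infinite.natEmbedding B hB).injective (Subtype.ext hxy)
  set e : ℕ → ℕ → ℕ := fun i j => b (Nat.pair i j) with he
  have heinj : ∀ i j i' j', e i j = e i' j' → i = i' ∧ j = j' := by
    intro i j i' j' hE
    exact Nat.pair_eq_pair.mp (hbinj hE)
  have heB : ∀ i j, e i j ∈ B := fun i j => ((Set.Infinite.natEmbedding B hB) (Nat.pair i j)).2
  -- Step 3: sizes and shifts
  set m : ℕ → ℕ := fun i => M i - M (i - 1) with hm
  have hm1 : ∀ i, 1 ≤ i → 1 ≤ m i := by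
    intro i hi
    have := hMs (show i - 1 < i by omega)
    simp only [hm]
    omega
  set c : ℕ → ℕ := fun i => if i = 1 then t (M 1) else t (M i) - t (M (i - 1)) with hc
  have hcsum : ∀ k, 1 ≤ k → ∑ i ∈ Finset.Icc 1 k, c i = t (M k) := by
    intro k hk
    induction k with
    | zero => omega
    | succ n ih =>
      rcases Nat.eq_zero_or_pos n with rfl | hn
      · simp [hc]
      · rw [Finset.sum_Icc_succ_top (by omega), ih hn]
        have h1 := ht n hn
        have h2 : c (n + 1) = t (M (n + 1)) - t (M n) := by
          simp only [hc]
          rw [if_neg (by omega)]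
          simp
        rw [h2]
        omega
  have hmsum : ∀ k, 1 ≤ k → ∑ i ∈ Finset.Icc 1 k, m i = M k := by
    intro k hk
    induction k with
    | zero => omega
    | succ n ih =>
      rcases Nat.eq_zero_or_pos n with rfl | hn
      · simp [hm, hM0]
      · rw [Finset.sum_Icc_succ_top (by omega), ih hn]
        have h1 := hMs (show n < n + 1 by omega)
        simp only [hm, Nat.add_sub_cancel]
        omega
  -- Step 4: the sets
  refine ⟨fun i => (fun j => (∑ j' ∈ Finset.range (m i - 1), e i j') + e i j + c i) ''
      {j | m i - 1 ≤ j}, ?_, ?_⟩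
  · intro n hn
    apply Set.Infinite.image
    · intro j1 _ j2 _ hE
      dsimp only at hE
      have : e n j1 = e n j2 := by omega
      exact (heinj n j1 n j2 this).2
    · exact Set.Ici_infinite _
  · intro k hk g hg
    have hgex : ∀ i, 1 ≤ i → i ≤ k → ∃ j, m i - 1 ≤ j ∧
        (∑ j' ∈ Finset.range (m i - 1), e i j') + e i j + c i = g i := by
      intro i h1 h2
      obtain ⟨j, hj1, hj2⟩ := hg i h1 h2
      exact ⟨j, hj1, hj2⟩
    choose! J hJ1 hJ2 using hgex
    set T : ℕ → Finset ℕ := fun i => (insert (J i) (Finset.range (m i - 1))).image (e i)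
      with hT
    have hdisj : (↑(Finset.Icc 1 k) : Set ℕ).PairwiseDisjoint T := by
      intro i _ i' _ hne
      simp only [Function.onFun, Finset.disjoint_left, hT, Finset.mem_image]
      rintro x ⟨j, _, rfl⟩ ⟨j', _, hE⟩
      exact hne ((heinj i' j' i j hE).1).symm
    have hJnot : ∀ i ∈ Finset.Icc 1 k, J i ∉ Finset.range (m i - 1) := by
      intro i hi
      simp only [Finset.mem_Icc] at hi
      have := hJ1 i hi.1 hi.2
      simp only [Finset.mem_range]
      omega
    have heinj' : ∀ i, Function.Injective (e i) := by
      intro i j j' hE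
      exact (heinj i j i j' hE).2
    set F : Finset ℕ := (Finset.Icc 1 k).biUnion T with hF
    have hFB : ↑F ⊆ B := by
      intro x hx
      simp only [hF, Finset.coe_biUnion, Set.mem_iUnion, hT, Finset.coe_image,
        Set.mem_image] at hx
      obtain ⟨i, _, j, _, rfl⟩ := hx
      exact heB i j
    have hFcard : F.card = M k := by
      rw [hF, Finset.card_biUnion hdisj]
      rw [← hmsum k hk]
      refine Finset.sum_congr rfl ?_
      intro i hi
      rw [hT]
      rw [Finset.card_image_of_injective _ (heinj' i),
        Finset.card_insert_of_notMem (hJnot i hi), Finset.card_range]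
      simp only [Finset.mem_Icc] at hi
      have := hm1 i hi.1
      omega
    have hFsum : ∑ x ∈ F, x =
        ∑ i ∈ Finset.Icc 1 k, ((∑ j' ∈ Finset.range (m i - 1), e i j') + e i (J i)) := by
      rw [hF, Finset.sum_biUnion hdisj]
      refine Finset.sum_congr rfl ?_
      intro i hi
      rw [hT, Finset.sum_image (fun j _ j' _ hE => heinj' i hE),
        Finset.sum_insert (hJnot i hi)]
      omega
    have hA := h (M k) (hM1 k hk) F hFB hFcard
    have hgsum : ∑ i ∈ Finset.Icc 1 k, g i = (∑ x ∈ F, x) + t (M k) := by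
      rw [hFsum, ← hcsum k hk, ← Finset.sum_add_distrib]
      refine Finset.sum_congr rfl ?_
      intro i hi
      simp only [Finset.mem_Icc] at hi
      rw [← hJ2 i hi.1 hi.2]
    rw [hgsum]
    exact hA
end

section
/- Let (X, T) be a topological system, a ∈ X, and σ a Borel probability measure on X^{ℕ₀} whose projection to the 0-th coordinate is δ_a, and which is left-progressive. Suppose E ⊆ X is open and there exists t ∈ ℕ with σ_2(X × T^{−t}E × T^{−t}E) > 0. Then there exist b_1 < b_2 in ℕ with a ∈ T^{−(t + b_1 + b_2)} E, i.e. T^{t + b_1 + b_2} a ∈ E. -/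
open MeasureTheory

/-- Left-progressiveness of a measure `σ` on `X^{ℕ₀}`: for each `k ≥ 1` and
open `U_1,…,U_k` with `σ_k(X × U_1 × ⋯ × U_k) > 0`, there are infinitely many
`n` with `σ_k((X × U_1 × ⋯ × U_k) ∩ T_Δ^{-n}(U_1 × ⋯ × U_k × X)) > 0`. -/
def IsLeftProgressive {X : Type} [MetricSpace X] [CompactSpace X]
    [MeasurableSpace X] (T : X ≃ₜ X) (σ : Measure (ℕ → X)) : Prop :=
  ∀ k : ℕ, 1 ≤ k → ∀ U : ℕ → Set X, (∀ j, IsOpen (U j)) →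
    0 < σ {x | ∀ j, 1 ≤ j → j ≤ k → x j ∈ U j} →
    {n : ℕ | 1 ≤ n ∧
      0 < σ ({x | ∀ j, 1 ≤ j → j ≤ k → x j ∈ U j} ∩
        {x | ∀ j, 1 ≤ j → j ≤ k → (⇑T)^[n] (x (j - 1)) ∈ U j})}.Infinite

theorem stmt16 {X : Type} [MetricSpace X] [CompactSpace X]
    [MeasurableSpace X] [BorelSpace X]
    (T : X ≃ₜ X) (a : X) (σ : Measure (ℕ → X)) [IsProbabilityMeasure σ]
    (h0 : σ.map (fun x => x 0) = Measure.dirac a)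
    (hLP : IsLeftProgressive T σ)
    (E : Set X) (hE : IsOpen E) (t : ℕ)
    (ht : 0 < σ {x : ℕ → X | (⇑T)^[t] (x 1) ∈ E ∧ (⇑T)^[t] (x 2) ∈ E}) :
    ∃ b₁ b₂ : ℕ, 1 ≤ b₁ ∧ b₁ < b₂ ∧ (⇑T)^[t + b₁ + b₂] a ∈ E := by
  set Us : Set X := (⇑T)^[t] ⁻¹' E with hUs
  have hUsOpen : IsOpen Us := hE.preimage (by
    exact Continuous.iterate T.continuous t)
  -- First application
  have h1 : 0 < σ {x | ∀ j, 1 ≤ j → j ≤ 2 → x j ∈ (fun _ => Us) j} := by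
    refine lt_of_lt_of_le ht (measure_mono ?_)
    rintro x ⟨hx1, hx2⟩ j hj1 hj2
    interval_cases j <;> assumption
  have hinf1 := hLP 2 (by norm_num) (fun _ => Us) (fun _ => hUsOpen) h1
  obtain ⟨b₁, hb₁⟩ := hinf1.nonempty
  obtain ⟨hb₁1, hb₁pos⟩ := hb₁
  -- Second application
  set V : ℕ → Set X := fun j => if j = 1 then Us ∩ (⇑T)^[b₁] ⁻¹' Us else Us with hV
  have hVOpen : ∀ j, IsOpen (V j) := by
    intro j
    by_cases h : j = 1 <;> simp [hV, h]
    · exact hUsOpen.inter (hUsOpen.preimage (Continuous.iterate T.continuous b₁))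
    · exact hUsOpen
  have h2 : 0 < σ {x | ∀ j, 1 ≤ j → j ≤ 2 → x j ∈ V j} := by
    refine lt_of_lt_of_le hb₁pos (measure_mono ?_)
    rintro x ⟨hxA, hxB⟩ j hj1 hj2
    interval_cases j
    · simp only [hV, if_pos rfl]
      exact ⟨hxA 1 le_rfl (by norm_num), hxB 2 (by norm_num) le_rfl⟩
    · simpa [hV] using hxA 2 (by norm_num) le_rfl
  have hinf2 := hLP 2 (by norm_num) V hVOpen h2
  obtain ⟨b₂, hb₂mem, hb₂gt⟩ := hinf2.exists_gt b₁
  obtain ⟨hb₂1, hb₂pos⟩ := hb₂mem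
  -- Use that x 0 = a almost everywhere
  have hmeas : σ {x : ℕ → X | x 0 ≠ a} = 0 := by
    have heq : σ ((fun x : ℕ → X => x 0) ⁻¹' {a}ᶜ) = (σ.map (fun x => x 0)) {a}ᶜ :=
      (Measure.map_apply (measurable_pi_apply 0) (measurableSet_singleton a).compl).symm
    have : σ ((fun x : ℕ → X => x 0) ⁻¹' {a}ᶜ) = 0 := by
      rw [heq, h0]; simp
    simpa [Set.preimage] using this
  set S := {x : ℕ → X | ∀ j, 1 ≤ j → j ≤ 2 → x j ∈ V j} ∩
      {x : ℕ → X | ∀ j, 1 ≤ j → j ≤ 2 → (⇑T)^[b₂] (x (j - 1)) ∈ V j} with hS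
  have hpos : 0 < σ (S ∩ {x | x 0 = a}) := by
    have hle : σ S ≤ σ (S ∩ {x | x 0 = a}) + σ (S \ {x | x 0 = a}) :=
      measure_le_inter_add_diff σ S _
    have hdiff : σ (S \ {x | x 0 = a}) = 0 :=
      measure_mono_null (fun x hx => hx.2) hmeas
    rw [hdiff, add_zero] at hle
    exact lt_of_lt_of_le hb₂pos hle
  obtain ⟨x, hxS, hx0⟩ := nonempty_of_measure_ne_zero hpos.ne'
  have hkey := hxS.2 1 le_rfl (by norm_num)
  simp only [hV, if_pos rfl, Nat.sub_self, Set.mem_inter_iff, Set.mem_preimage] at hkey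
  rw [hx0] at hkey
  refine ⟨b₁, b₂, hb₁1, hb₂gt, ?_⟩
  have : (⇑T)^[t + b₁ + b₂] a = (⇑T)^[t] ((⇑T)^[b₁] ((⇑T)^[b₂] a)) := by
    rw [Function.iterate_add_apply, Function.iterate_add_apply]
  rw [this]
  exact hkey.2
end
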